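/- arXiv:math/9501218 — 2 statements merged into one kernel-verified Lean document; each statement's English description precedes it below -/
import Mathlib

section
/- Let J₀(x) = (1/π) ∫_{-1}^{1} cos(xt)/√(1−t²) dt. Then lim_{M→∞} ∫_0^M J₀(x) dx = 1. -/
open MeasureTheory Filter Asymptotics Real Set
open scoped Topology

/-- The Bessel function of order zero,
`J₀(x) = (1/π) ∫_{-1}^{1} cos(xt)/√(1−t²) dt`. -/
noncomputable def J0 (x : ℝ) : ℝ :=
  (1 / π) * ∫ t in (-1 : ℝ)..1, Real.cos (x * t) / Real.sqrt (1 - t ^ 2)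

/-! ### Auxiliary lemmas -/

lemma integrableOn_isq : IntegrableOn (fun t : ℝ => 1 / Real.sqrt (1 - t ^ 2)) (Ioc (-1) 1) := by
  apply intervalIntegral.integrableOn_deriv_of_nonneg (Real.continuous_arcsin.continuousOn)
  · intro x hx
    exact Real.hasDerivAt_arcsin (ne_of_gt hx.1) (ne_of_lt hx.2)
  · intro x hx
    positivity

/-- Fubini: `∫_0^M J0 = (1/π) ∫_{-1}^1 sin(Mt)/(t√(1-t²)) dt`. -/
lemma swap_eq {M : ℝ} (hM : 0 < M) :
    ∫ x in (0:ℝ)..M, J0 x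
      = (1/π) * ∫ t in (-1:ℝ)..1, Real.sin (M * t) / (t * Real.sqrt (1 - t ^ 2)) := by
  unfold J0
  rw [intervalIntegral.integral_const_mul]
  congr 1
  rw [intervalIntegral.integral_of_le hM.le,
    intervalIntegral.integral_of_le (by norm_num : (-1:ℝ) ≤ 1)]
  have hswap :
      ∫ x in Ioc (0:ℝ) M, (∫ t in (-1:ℝ)..1, Real.cos (x * t) / Real.sqrt (1 - t ^ 2))
        = ∫ t in Ioc (-1:ℝ) 1, ∫ x in Ioc (0:ℝ) M, Real.cos (x * t) / Real.sqrt (1 - t ^ 2) := by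
    have h1 : ∀ x : ℝ, (∫ t in (-1:ℝ)..1, Real.cos (x * t) / Real.sqrt (1 - t ^ 2))
        = ∫ t in Ioc (-1:ℝ) 1, Real.cos (x * t) / Real.sqrt (1 - t ^ 2) := fun x =>
      intervalIntegral.integral_of_le (by norm_num)
    simp_rw [h1]
    apply MeasureTheory.integral_integral_swap
    apply Integrable.mono'
      (g := fun z : ℝ × ℝ => (1:ℝ) * (1 / Real.sqrt (1 - z.2 ^ 2)))
    · exact Integrable.mul_prod (integrableOn_const (C := (1:ℝ)) measure_Ioc_lt_top.ne)
        integrableOn_isq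
    · apply Measurable.aestronglyMeasurable
      apply Measurable.div
      · exact (Real.continuous_cos.comp (continuous_fst.mul continuous_snd)).measurable
      · exact (Real.continuous_sqrt.comp
          (continuous_const.sub (continuous_snd.pow 2))).measurable
    · refine Eventually.of_forall fun z => ?_
      simp only [Function.uncurry, one_mul, Real.norm_eq_abs, abs_div,
        abs_of_nonneg (Real.sqrt_nonneg _)]
      rcases eq_or_lt_of_le (Real.sqrt_nonneg (1 - z.2 ^ 2)) with h | h
      · simp [← h]
      · gcongr
        exact abs_cos_le_one _
  rw [hswap]
  apply setIntegral_congr_ae measurableSet_Ioc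
  filter_upwards [compl_mem_ae_iff.2 (volume_singleton (a := (0:ℝ)))] with t ht0 _
  have ht0' : t ≠ 0 := ht0
  rw [integral_div, ← intervalIntegral.integral_of_le hM.le]
  have : ∫ x in (0:ℝ)..M, Real.cos (x * t) = t⁻¹ * Real.sin (M * t) := by
    rw [intervalIntegral.integral_comp_mul_right Real.cos ht0']
    simp [integral_cos, mul_comm]
  rw [this]
  field_simp

/-! ### The Dirichlet integral -/

lemma inner_exp_sin (t : ℝ) {M : ℝ} (hM : 0 ≤ M) :
    ∫ x in (0:ℝ)..M, Real.exp (-(x*t)) * Real.sin x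
      = (1 - Real.exp (-(M*t)) * (t * Real.sin M + Real.cos M)) / (1+t^2) := by
  have ht : (1:ℝ) + t^2 ≠ 0 := by positivity
  have key : ∀ x : ℝ, HasDerivAt
      (fun y => -(Real.exp (-(y*t)) * (t * Real.sin y + Real.cos y)) / (1+t^2))
      (Real.exp (-(x*t)) * Real.sin x) x := by
    intro x
    have h1 : HasDerivAt (fun y : ℝ => -(y*t)) (-t) x := by
      simpa using ((hasDerivAt_id x).mul_const t).fun_neg
    have h2 : HasDerivAt (fun y : ℝ => Real.exp (-(y*t)))
        (Real.exp (-(x*t)) * (-t)) x := h1.exp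
    have h3 : HasDerivAt (fun y : ℝ => t * Real.sin y + Real.cos y)
        (t * Real.cos x + (-Real.sin x)) x :=
      ((Real.hasDerivAt_sin x).const_mul t).add (Real.hasDerivAt_cos x)
    have h4 := ((h2.fun_mul h3).fun_neg).div_const (1+t^2)
    refine h4.congr_deriv ?_
    field_simp
    ring
  rw [intervalIntegral.integral_eq_sub_of_hasDerivAt (fun x _ => key x)
    (((Real.continuous_exp.comp (by continuity)).mul Real.continuous_sin).intervalIntegrable _ _)]
  simp [Real.cos_zero, Real.sin_zero]
  ring

lemma dirichlet_eq {M : ℝ} (hM : 0 < M) :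
    ∫ x in (0:ℝ)..M, Real.sin x / x
      = ∫ t in Ioi (0:ℝ), (1 - Real.exp (-(M*t)) * (t * Real.sin M + Real.cos M)) / (1+t^2) := by
  have hcont : Continuous (Function.uncurry fun (x t : ℝ) => Real.exp (-(x*t)) * Real.sin x) := by
    apply Continuous.mul
    · exact Real.continuous_exp.comp (continuous_fst.mul continuous_snd).neg
    · exact Real.continuous_sin.comp continuous_fst
  have hint : Integrable (Function.uncurry fun (x t : ℝ) => Real.exp (-(x*t)) * Real.sin x)
      ((volume.restrict (Ioc 0 M)).prod (volume.restrict (Ioi 0))) := by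
    rw [integrable_prod_iff hcont.aestronglyMeasurable]
    constructor
    · filter_upwards [ae_restrict_mem measurableSet_Ioc] with x hx
      have : Integrable (fun t : ℝ => Real.exp (-x * t)) (volume.restrict (Ioi 0)) :=
        exp_neg_integrableOn_Ioi 0 hx.1
      simpa [neg_mul] using this.mul_const (Real.sin x)
    · apply Integrable.mono' (g := fun _ : ℝ => (1:ℝ))
        (integrableOn_const measure_Ioc_lt_top.ne)
      · exact hcont.aestronglyMeasurable.norm.integral_prod_right'
      · filter_upwards [ae_restrict_mem measurableSet_Ioc] with x hx
        have hval : ∫ t in Ioi (0:ℝ), ‖Real.exp (-(x*t)) * Real.sin x‖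
            = |Real.sin x| * x⁻¹ := by
          have : ∀ t : ℝ, ‖Real.exp (-(x*t)) * Real.sin x‖
              = Real.exp (-x * t) * |Real.sin x| := by
            intro t
            simp [abs_of_pos (Real.exp_pos _), neg_mul, mul_comm, abs_mul]
          simp_rw [this]
          rw [MeasureTheory.integral_mul_const]
          rw [show (fun t : ℝ => Real.exp (-x * t)) = fun t => Real.exp (-(x * t)) by
            simp [neg_mul]] at *
          have := integral_comp_mul_left_Ioi (fun u => Real.exp (-u)) 0 hx.1
          simp only [mul_zero] at this
          rw [this, integral_exp_neg_Ioi_zero]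
          simp [smul_eq_mul]
          ring
        have hx0 := hx.1
        simp only [Function.uncurry]
        rw [Real.norm_eq_abs, hval,
          abs_of_nonneg (mul_nonneg (abs_nonneg _) (inv_nonneg.2 hx0.le))]
        calc |Real.sin x| * x⁻¹ ≤ x * x⁻¹ :=
              mul_le_mul_of_nonneg_right ((Real.abs_sin_le_abs).trans_eq (abs_of_pos hx0))
                (inv_nonneg.2 hx0.le)
          _ = 1 := mul_inv_cancel₀ hx0.ne'
  have swap := MeasureTheory.integral_integral_swap hint
  have lhs_eq : ∫ x in (0:ℝ)..M, Real.sin x / x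
      = ∫ x in Ioc (0:ℝ) M, ∫ t in Ioi (0:ℝ), Real.exp (-(x*t)) * Real.sin x := by
    rw [intervalIntegral.integral_of_le hM.le]
    apply setIntegral_congr_ae measurableSet_Ioc
    filter_upwards with x hx
    rw [MeasureTheory.integral_mul_const,
      show (fun t : ℝ => Real.exp (-(x * t))) = fun t => Real.exp (-(x * t)) from rfl]
    have := integral_comp_mul_left_Ioi (fun u => Real.exp (-u)) 0 hx.1
    simp only [mul_zero] at this
    rw [show ∫ t in Ioi (0:ℝ), Real.exp (-(x*t))
        = ∫ t in Ioi (0:ℝ), (fun u => Real.exp (-u)) (x * t) from rfl,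
      this, integral_exp_neg_Ioi_zero]
    simp [div_eq_mul_inv, mul_comm]
  rw [lhs_eq, swap]
  apply setIntegral_congr_ae measurableSet_Ioi
  filter_upwards with t ht
  rw [← intervalIntegral.integral_of_le hM.le]
  exact inner_exp_sin t hM.le

noncomputable def Eterm (M : ℝ) : ℝ :=
  ∫ t in Ioi (0:ℝ), Real.exp (-(M*t)) * (t * Real.sin M + Real.cos M) / (1+t^2)

lemma Eterm_bound {M : ℝ} (hM : 0 < M) :
    (∀ᵐ t ∂(volume.restrict (Ioi (0:ℝ))),
      ‖Real.exp (-(M*t)) * (t * Real.sin M + Real.cos M) / (1+t^2)‖ ≤ 2 * Real.exp (-M*t)) := by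
  filter_upwards [ae_restrict_mem measurableSet_Ioi] with t ht
  have ht0 : (0:ℝ) < t := ht
  have h1 : |t * Real.sin M + Real.cos M| ≤ t + 1 := by
    calc |t * Real.sin M + Real.cos M| ≤ |t * Real.sin M| + |Real.cos M| := abs_add_le _ _
      _ ≤ t * 1 + 1 := by
          rw [abs_mul, abs_of_pos ht0]
          exact add_le_add (mul_le_mul_of_nonneg_left (Real.abs_sin_le_one M) ht0.le)
            (Real.abs_cos_le_one M)
      _ = t + 1 := by ring
  have h2 : (0:ℝ) < 1 + t^2 := by positivity
  rw [Real.norm_eq_abs, abs_div, abs_of_pos h2, abs_mul,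
    abs_of_pos (Real.exp_pos _), div_le_iff₀ h2, neg_mul]
  calc Real.exp (-(M*t)) * |t * Real.sin M + Real.cos M|
      ≤ Real.exp (-(M*t)) * (t + 1) :=
        mul_le_mul_of_nonneg_left h1 (Real.exp_pos _).le
    _ ≤ 2 * Real.exp (-(M*t)) * (1 + t^2) := by
        nlinarith [Real.exp_pos (-(M*t)), sq_nonneg (t-1), sq_nonneg t]

lemma Eterm_integrable {M : ℝ} (hM : 0 < M) :
    IntegrableOn (fun t => Real.exp (-(M*t)) * (t * Real.sin M + Real.cos M) / (1+t^2))
      (Ioi (0:ℝ)) := by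
  apply Integrable.mono' ((exp_neg_integrableOn_Ioi 0 hM).const_mul 2)
  · apply Continuous.aestronglyMeasurable
    apply Continuous.div
    · exact (Real.continuous_exp.comp (continuous_const.mul continuous_id).neg).mul
        (by continuity)
    · continuity
    · intro t; positivity
  · exact Eterm_bound hM

lemma Eterm_norm_le {M : ℝ} (hM : 0 < M) : ‖Eterm M‖ ≤ 2 / M := by
  have h := norm_integral_le_of_norm_le ((exp_neg_integrableOn_Ioi 0 hM).const_mul 2)
    (Eterm_bound hM)
  refine h.trans_eq ?_
  have h2 : ∀ t : ℝ, 2 * Real.exp (-M * t) = 2 * (fun u => Real.exp (-u)) (M * t) := by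
    intro t; simp [neg_mul]
  simp_rw [h2]
  rw [MeasureTheory.integral_const_mul, integral_comp_mul_left_Ioi (fun u => Real.exp (-u)) 0 hM,
    mul_zero, integral_exp_neg_Ioi_zero, smul_eq_mul]
  ring

lemma Eterm_tendsto : Tendsto Eterm atTop (𝓝 0) := by
  refine squeeze_zero_norm' (a := fun M : ℝ => 2 / M) ?_ ?_
  · filter_upwards [eventually_gt_atTop (0:ℝ)] with M hM using Eterm_norm_le hM
  · simpa [div_eq_mul_inv] using tendsto_inv_atTop_zero.const_mul (2:ℝ)

lemma dirichlet_split {M : ℝ} (hM : 0 < M) :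
    ∫ x in (0:ℝ)..M, Real.sin x / x = π/2 - Eterm M := by
  rw [dirichlet_eq hM]
  have heq : ∀ t : ℝ, (1 - Real.exp (-(M*t)) * (t * Real.sin M + Real.cos M)) / (1+t^2)
      = (1+t^2)⁻¹ - Real.exp (-(M*t)) * (t * Real.sin M + Real.cos M) / (1+t^2) := by
    intro t; rw [sub_div, one_div]
  simp_rw [heq]
  rw [MeasureTheory.integral_sub integrable_inv_one_add_sq.integrableOn (Eterm_integrable hM),
    integral_Ioi_inv_one_add_sq]
  simp [Eterm]

lemma dirichlet_tendsto :
    Tendsto (fun M : ℝ => ∫ x in (0:ℝ)..M, Real.sin x / x) atTop (𝓝 (π/2)) := by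
  have h : Tendsto (fun M : ℝ => π/2 - Eterm M) atTop (𝓝 (π/2 - 0)) :=
    tendsto_const_nhds.sub Eterm_tendsto
  rw [sub_zero] at h
  apply h.congr'
  filter_upwards [eventually_gt_atTop (0:ℝ)] with M hM
  exact (dirichlet_split hM).symm

/-! ### The principal term -/

lemma sin_div_intervalIntegrable (M a b : ℝ) :
    IntervalIntegrable (fun t => Real.sin (M*t)/t) volume a b := by
  constructor <;>
  · apply Integrable.mono' (g := fun _ : ℝ => |M|)
      (integrableOn_const measure_Ioc_lt_top.ne)
    · exact (((Real.continuous_sin.comp (continuous_const.mul continuous_id)).measurable).div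
        measurable_id).aestronglyMeasurable
    · filter_upwards with t
      rw [Real.norm_eq_abs, abs_div]
      rcases eq_or_ne t 0 with rfl | ht
      · simp
      · rw [div_le_iff₀ (abs_pos.2 ht)]
        calc |Real.sin (M*t)| ≤ |M*t| := Real.abs_sin_le_abs
          _ = |M| * |t| := abs_mul _ _

lemma A_eq {M : ℝ} (hM : 0 < M) :
    ∫ t in (-1:ℝ)..1, Real.sin (M*t)/t = 2 * ∫ u in (0:ℝ)..M, Real.sin u / u := by
  have heven : ∫ t in (-1:ℝ)..0, Real.sin (M*t)/t = ∫ t in (0:ℝ)..1, Real.sin (M*t)/t := by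
    have := intervalIntegral.integral_comp_neg (a := (0:ℝ)) (b := 1)
      (fun t => Real.sin (M*t)/t)
    rw [neg_zero] at this
    rw [← this]
    congr 1
    funext t
    rw [mul_neg, Real.sin_neg, neg_div_neg_eq]
  have hsplit := intervalIntegral.integral_add_adjacent_intervals
    (sin_div_intervalIntegrable M (-1) 0) (sin_div_intervalIntegrable M 0 1)
  have hsub : ∫ t in (0:ℝ)..1, Real.sin (M*t)/t = ∫ u in (0:ℝ)..M, Real.sin u / u := by
    have hfun : (fun t => Real.sin (M*t)/t)
        = fun t => M * ((fun u => Real.sin u / u) (t * M)) := by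
      funext t
      rcases eq_or_ne t 0 with rfl | ht
      · simp
      · field_simp
    rw [hfun, intervalIntegral.integral_const_mul,
      intervalIntegral.integral_comp_mul_right (fun u => Real.sin u / u) hM.ne']
    simp [smul_eq_mul, ← mul_assoc, mul_inv_cancel₀ hM.ne']
  rw [← hsplit, heven, hsub, two_mul]

lemma A_tendsto :
    Tendsto (fun M : ℝ => ∫ t in (-1:ℝ)..1, Real.sin (M*t)/t) atTop (𝓝 π) := by
  have h := (dirichlet_tendsto).const_mul (2:ℝ)
  have h2 : (2:ℝ) * (π/2) = π := by ring
  rw [h2] at h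
  apply h.congr'
  filter_upwards [eventually_gt_atTop (0:ℝ)] with M hM
  exact (A_eq hM).symm

/-! ### The Riemann–Lebesgue term -/

noncomputable def gg (t : ℝ) : ℝ :=
  (1 - Real.sqrt (1 - t^2)) / (t * Real.sqrt (1 - t^2))

lemma gg_bound {t : ℝ} (ht : t ∈ Ioc (-1:ℝ) 1) : |gg t| ≤ 1 / Real.sqrt (1 - t^2) := by
  rcases eq_or_ne t 1 with rfl | ht1
  · simp [gg]
  rcases eq_or_ne t 0 with rfl | ht0
  · simp [gg]
  have htlt : t < 1 := lt_of_le_of_ne ht.2 ht1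
  have hs2 : (0:ℝ) < 1 - t^2 := by nlinarith [ht.1]
  set s := Real.sqrt (1 - t^2) with hs
  have hspos : 0 < s := Real.sqrt_pos.2 hs2
  have hssq : s^2 = 1 - t^2 := Real.sq_sqrt hs2.le
  have hsle : s ≤ 1 := by
    rw [show (1:ℝ) = Real.sqrt 1 by simp [Real.sqrt_one]]
    exact Real.sqrt_le_sqrt (by nlinarith)
  have htabs : |t| ≤ 1 := abs_le.2 ⟨ht.1.le, ht.2⟩
  have htpos : 0 < |t| := abs_pos.2 ht0
  have hkey : 1 - s ≤ |t| := by
    nlinarith [_root_.sq_abs t, sq_nonneg (1 - |t| - s)]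
  rw [gg, abs_div, abs_mul, abs_of_pos hspos,
    div_le_div_iff₀ (by positivity) hspos]
  have h1s : |1 - s| = 1 - s := abs_of_nonneg (by linarith)
  rw [h1s]
  nlinarith [hspos, htpos]

lemma gg_measurable : Measurable gg := by
  apply Measurable.div
  · exact (continuous_const.sub (Real.continuous_sqrt.comp
      (continuous_const.sub (continuous_pow 2)))).measurable
  · exact (continuous_id.mul (Real.continuous_sqrt.comp
      (continuous_const.sub (continuous_pow 2)))).measurable

lemma gg_integrableOn : IntegrableOn gg (Ioc (-1:ℝ) 1) := by
  apply Integrable.mono' integrableOn_isq gg_measurable.aestronglyMeasurable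
  filter_upwards [ae_restrict_mem measurableSet_Ioc] with t ht
  exact gg_bound ht

noncomputable def GG : ℝ → ℝ := (Ioc (-1:ℝ) 1).indicator gg

lemma GG_integrable : Integrable GG :=
  (integrable_indicator_iff measurableSet_Ioc).2 gg_integrableOn

lemma B_tendsto :
    Tendsto (fun M : ℝ => ∫ t in Ioc (-1:ℝ) 1, Real.sin (M*t) * gg t) atTop (𝓝 0) := by
  have hGc : Integrable (fun t => (GG t : ℂ)) volume := GG_integrable.ofReal
  have RL := Real.zero_at_infty_fourier (fun t => (GG t : ℂ))
  have hcomp : Tendsto (fun M : ℝ => M / (2*π)) atTop (cocompact ℝ) := by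
    exact (tendsto_id.atTop_div_const (by positivity)).mono_right
      atTop_le_cocompact
  have key : ∀ M : ℝ, ∫ t in Ioc (-1:ℝ) 1, Real.sin (M*t) * gg t
      = -(FourierTransform.fourier (fun t => (GG t : ℂ)) (M / (2*π))).im := by
    intro M
    rw [Real.fourier_real_eq_integral_exp_smul]
    have hint : Integrable (fun v : ℝ =>
        Complex.exp (↑(-2 * π * v * (M / (2*π))) * Complex.I) * (GG v : ℂ)) volume := by
      apply Integrable.bdd_mul (c := 1) hGc
      · apply Continuous.aestronglyMeasurable
        exact Complex.continuous_exp.comp (by continuity)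
      · refine Eventually.of_forall fun v => ?_
        rw [Complex.norm_exp_ofReal_mul_I]
    have him : ∀ v : ℝ, (Complex.exp (↑(-2 * π * v * (M / (2*π))) * Complex.I)
        * ((GG v : ℝ) : ℂ)).im = -(Real.sin (M*v) * GG v) := by
      intro v
      rw [Complex.mul_im, Complex.exp_ofReal_mul_I_im, Complex.exp_ofReal_mul_I_re]
      have harg : -2 * π * v * (M / (2*π)) = -(M*v) := by
        field_simp
      rw [harg, Real.sin_neg]
      simp
    simp_rw [smul_eq_mul]
    rw [← RCLike.im_eq_complex_im, ← integral_im hint, RCLike.im_eq_complex_im]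
    simp_rw [him, MeasureTheory.integral_neg, neg_neg]
    rw [← integral_indicator measurableSet_Ioc]
    congr 1
    funext v
    by_cases hv : v ∈ Ioc (-1:ℝ) 1
    · simp [GG, indicator_of_mem hv]
    · simp [GG, indicator_of_notMem hv]
  simp_rw [key]
  have := (Complex.continuous_im.tendsto 0).comp (RL.comp hcomp)
  simpa using this.neg

/-! ### Decomposition -/

lemma decomp {M : ℝ} (hM : 0 < M) :
    ∫ t in (-1:ℝ)..1, Real.sin (M*t) / (t * Real.sqrt (1 - t^2))
      = (∫ t in (-1:ℝ)..1, Real.sin (M*t)/t)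
        + ∫ t in Ioc (-1:ℝ) 1, Real.sin (M*t) * gg t := by
  rw [intervalIntegral.integral_of_le (by norm_num : (-1:ℝ) ≤ 1),
    intervalIntegral.integral_of_le (by norm_num : (-1:ℝ) ≤ 1)]
  have h1 : IntegrableOn (fun t => Real.sin (M*t)/t) (Ioc (-1:ℝ) 1) :=
    (sin_div_intervalIntegrable M (-1) 1).1
  have h2 : IntegrableOn (fun t => Real.sin (M*t) * gg t) (Ioc (-1:ℝ) 1) := by
    apply Integrable.mono' integrableOn_isq
    · exact ((Real.continuous_sin.comp
        (continuous_const.mul continuous_id)).measurable.mul gg_measurable).aestronglyMeasurable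
    · filter_upwards [ae_restrict_mem measurableSet_Ioc] with t ht
      rw [Real.norm_eq_abs, abs_mul]
      calc |Real.sin (M*t)| * |gg t| ≤ 1 * |gg t| :=
            mul_le_mul_of_nonneg_right (Real.abs_sin_le_one _) (abs_nonneg _)
        _ = |gg t| := one_mul _
        _ ≤ 1 / Real.sqrt (1 - t^2) := gg_bound ht
  rw [← MeasureTheory.integral_add h1 h2]
  apply setIntegral_congr_ae measurableSet_Ioc
  have hae0 : ∀ᵐ t : ℝ ∂volume, t ≠ 0 :=
    compl_mem_ae_iff.2 (volume_singleton (a := (0:ℝ)))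
  have hae1 : ∀ᵐ t : ℝ ∂volume, t ≠ 1 :=
    compl_mem_ae_iff.2 (volume_singleton (a := (1:ℝ)))
  filter_upwards [hae0, hae1] with t ht0 ht1 ht
  have htlt : t < 1 := lt_of_le_of_ne ht.2 ht1
  have hs2 : (0:ℝ) < 1 - t^2 := by nlinarith [ht.1]
  have hspos : 0 < Real.sqrt (1 - t^2) := Real.sqrt_pos.2 hs2
  rw [gg]
  field_simp
  ring

/-! ### Main theorem -/

/-- **Appendix (Pinsky).** `lim_{M→∞} ∫_0^M J₀(x) dx = 1`. -/
theorem integral_J0_tendsto_one :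
    Tendsto (fun M : ℝ => ∫ x in (0 : ℝ)..M, J0 x) atTop (𝓝 1) := by
  have h : Tendsto (fun M : ℝ => (1/π) *
      ((∫ t in (-1:ℝ)..1, Real.sin (M*t)/t)
        + ∫ t in Ioc (-1:ℝ) 1, Real.sin (M*t) * gg t)) atTop (𝓝 ((1/π) * (π + 0))) :=
    (A_tendsto.add B_tendsto).const_mul _
  have h2 : (1/π) * (π + 0) = 1 := by
    rw [add_zero, one_div, inv_mul_cancel₀ Real.pi_ne_zero]
  rw [h2] at h
  apply h.congr'
  filter_upwards [eventually_gt_atTop (0:ℝ)] with M hM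
  rw [swap_eq hM, decomp hM]
end

section
/- Let J₀(x) = (1/π) ∫_{-1}^{1} cos(xt)/√(1−t²) dt and K(x) = ∫_0^x J₀(t) dt. Then K is bounded on [0,∞), i.e., there exists C such that |K(x)| ≤ C for all x ≥ 0. -/
open MeasureTheory Filter Asymptotics Real Set
open scoped Topology


noncomputable def psi (t : ℝ) : ℝ := 1 / Real.sqrt (1 - t ^ 2)

lemma psi_meas : Measurable psi :=
  measurable_const.div (Real.continuous_sqrt.measurable.comp
    (measurable_const.sub (measurable_id.pow_const 2)))

lemma psi_nonneg (t : ℝ) : 0 ≤ psi t := by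
  unfold psi; positivity

lemma psi_neg (t : ℝ) : psi (-t) = psi t := by unfold psi; ring_nf

lemma psi_intInt_right : IntervalIntegrable psi volume 0 1 := by
  have hg : IntervalIntegrable (fun t : ℝ => (1 - t) ^ (-(1/2) : ℝ)) volume 0 1 := by
    have := (intervalIntegral.intervalIntegrable_rpow' (a := 0) (b := 1)
      (r := -(1/2)) (by norm_num)).comp_sub_left 1
    simpa using this.symm
  apply hg.mono_fun' psi_meas.aestronglyMeasurable
  rw [Set.uIoc_of_le (by norm_num : (0:ℝ) ≤ 1)]
  filter_upwards [ae_restrict_mem measurableSet_Ioc] with t ht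
  rw [Real.norm_eq_abs, abs_of_nonneg (psi_nonneg t)]
  rcases eq_or_lt_of_le ht.2 with h1 | h1
  · rcases h1 with rfl
    norm_num [psi, Real.zero_rpow]
  · have h0 : 0 < t := ht.1
    have hle : 1 - t ≤ 1 - t ^ 2 := by nlinarith
    have hpos : (0:ℝ) < 1 - t := by linarith
    have hs : (0:ℝ) < Real.sqrt (1 - t) := Real.sqrt_pos.2 hpos
    have key : psi t ≤ 1 / Real.sqrt (1 - t) :=
      one_div_le_one_div_of_le hs (Real.sqrt_le_sqrt hle)
    rw [Real.rpow_neg hpos.le, ← Real.sqrt_eq_rpow, ← one_div]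
    exact key

lemma psi_intInt : IntervalIntegrable psi volume (-1) 1 := by
  have hleft : IntervalIntegrable psi volume (-1) 0 := by
    have := ((IntervalIntegrable.iff_comp_neg (f := psi) (a := 0) (b := 1)).mp psi_intInt_right)
    simp only [psi_neg, neg_zero] at this
    exact this.symm
  exact hleft.trans psi_intInt_right




lemma sinc_intInt (a b : ℝ) : IntervalIntegrable (fun t => Real.sin t / t) volume a b := by
  rw [intervalIntegrable_iff]
  haveI : IsFiniteMeasure (volume.restrict (Set.uIoc a b)) :=
    ⟨by rw [Measure.restrict_apply_univ]; exact measure_Ioc_lt_top⟩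
  apply (integrable_const (1:ℝ)).mono'
  · exact (Real.measurable_sin.div measurable_id).aestronglyMeasurable
  · refine Filter.Eventually.of_forall fun t => ?_
    rcases eq_or_ne t 0 with rfl | ht
    · simp
    · rw [Real.norm_eq_abs, abs_div]
      exact div_le_one_of_le₀ Real.abs_sin_le_abs (abs_nonneg t)

lemma Si_bound {x : ℝ} (hx : 0 ≤ x) : |∫ t in (0:ℝ)..x, Real.sin t / t| ≤ 4 := by
  rcases le_total x 1 with h1 | h1
  · have := intervalIntegral.norm_integral_le_of_norm_le_const (C := 1) (a := 0) (b := x)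
      (f := fun t => Real.sin t / t) ?_
    · rw [Real.norm_eq_abs] at this
      calc |∫ t in (0:ℝ)..x, Real.sin t / t| ≤ 1 * |x - 0| := this
        _ ≤ 4 := by rw [sub_zero, abs_of_nonneg hx]; linarith
    · intro t ht
      rcases eq_or_ne t 0 with rfl | htne
      · simp
      · rw [Real.norm_eq_abs, abs_div]
        exact div_le_one_of_le₀ Real.abs_sin_le_abs (abs_nonneg t)
  · -- x ≥ 1
    have hsplit : (∫ t in (0:ℝ)..1, Real.sin t / t) + ∫ t in (1:ℝ)..x, Real.sin t / t
        = ∫ t in (0:ℝ)..x, Real.sin t / t :=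
      intervalIntegral.integral_add_adjacent_intervals (sinc_intInt 0 1) (sinc_intInt 1 x)
    have hb1 : |∫ t in (0:ℝ)..1, Real.sin t / t| ≤ 1 := by
      have := intervalIntegral.norm_integral_le_of_norm_le_const (C := 1) (a := 0) (b := 1)
        (f := fun t => Real.sin t / t) ?_
      · simpa using this
      · intro t ht
        rcases eq_or_ne t 0 with rfl | htne
        · simp
        · rw [Real.norm_eq_abs, abs_div]
          exact div_le_one_of_le₀ Real.abs_sin_le_abs (abs_nonneg t)
    -- integration by parts on [1, x]
    have hpos : ∀ t ∈ Set.uIcc (1:ℝ) x, (0:ℝ) < t := by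
      intro t ht
      rw [Set.uIcc_of_le h1] at ht
      linarith [ht.1]
    have hibp : ∫ t in (1:ℝ)..x, t⁻¹ * Real.sin t
        = x⁻¹ * (-Real.cos x) - 1⁻¹ * (-Real.cos 1) - ∫ t in (1:ℝ)..x, (-(t^2)⁻¹) * (-Real.cos t) := by
      apply intervalIntegral.integral_mul_deriv_eq_deriv_mul
        (u := fun t => t⁻¹) (u' := fun t => -(t^2)⁻¹) (v := fun t => -Real.cos t)
        (v' := fun t => Real.sin t)
      · intro t ht; exact hasDerivAt_inv (hpos t ht).ne'
      · intro t ht; exact (Real.hasDerivAt_cos t).neg.congr_deriv (neg_neg _)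
      · apply ContinuousOn.intervalIntegrable
        intro t ht
        exact (((continuousOn_id.pow 2).inv₀
          (fun s hs => pow_ne_zero 2 (hpos s hs).ne')).neg t ht)
      · exact (Real.continuous_sin.continuousOn).intervalIntegrable
    have hb2 : |∫ t in (1:ℝ)..x, Real.sin t / t| ≤ 3 := by
      have heq : (∫ t in (1:ℝ)..x, Real.sin t / t) = ∫ t in (1:ℝ)..x, t⁻¹ * Real.sin t := by
        apply intervalIntegral.integral_congr
        intro t ht; simp [div_eq_inv_mul]
      have hb3 : |∫ t in (1:ℝ)..x, (-(t^2)⁻¹) * (-Real.cos t)| ≤ 1 := by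
        have hle : ‖∫ t in (1:ℝ)..x, (-(t^2)⁻¹) * (-Real.cos t)‖
            ≤ |∫ t in (1:ℝ)..x, (t^2)⁻¹| := by
          apply intervalIntegral.norm_integral_le_abs_of_norm_le
          · refine Filter.Eventually.of_forall fun t => ?_
            rw [Real.norm_eq_abs, neg_mul_neg, abs_mul]
            calc |(t^2)⁻¹| * |Real.cos t| ≤ |(t^2)⁻¹| * 1 :=
                mul_le_mul_of_nonneg_left (Real.abs_cos_le_one t) (abs_nonneg _)
              _ = (t^2)⁻¹ := by rw [mul_one, abs_of_nonneg (by positivity)]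
          · apply ContinuousOn.intervalIntegrable
            exact (continuousOn_id.pow 2).inv₀ (fun s hs => pow_ne_zero 2 (hpos s hs).ne')
        have hcomp : (∫ t in (1:ℝ)..x, (t^2)⁻¹) = 1 - x⁻¹ := by
          have h0 : (0:ℝ) ∉ Set.uIcc (1:ℝ) x := fun h => by linarith [(hpos 0 h)]
          rw [show (fun t : ℝ => (t^2)⁻¹) = fun t : ℝ => t ^ (-2 : ℤ) from ?_]
          · rw [integral_zpow (Or.inr ⟨by norm_num, h0⟩)]
            norm_num
            ring
          · funext t; rw [zpow_neg, zpow_two]; ring_nf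
        rw [Real.norm_eq_abs, hcomp] at hle
        have h0 : (0:ℝ) ≤ x⁻¹ := by positivity
        have h2 : x⁻¹ ≤ 1 := inv_le_one_of_one_le₀ h1
        have : |1 - x⁻¹| = 1 - x⁻¹ := abs_of_nonneg (by linarith)
        linarith [hle.trans_eq this]
      rw [heq, hibp]
      have hx1 : |x⁻¹ * (-Real.cos x)| ≤ 1 := by
        rw [abs_mul, abs_neg]
        have hxi : |x⁻¹| ≤ 1 := by
          rw [abs_of_nonneg (by positivity)]
          exact inv_le_one_of_one_le₀ h1
        calc |x⁻¹| * |Real.cos x| ≤ 1 * 1 :=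
          mul_le_mul hxi (Real.abs_cos_le_one x) (abs_nonneg _) zero_le_one
        _ = 1 := by ring
      have hx2 : |1⁻¹ * (-Real.cos 1)| ≤ 1 := by
        simpa using Real.abs_cos_le_one 1
      calc |x⁻¹ * (-Real.cos x) - 1⁻¹ * (-Real.cos 1) - ∫ t in (1:ℝ)..x, (-(t^2)⁻¹) * (-Real.cos t)|
          ≤ |x⁻¹ * (-Real.cos x)| + |1⁻¹ * (-Real.cos 1)| + |∫ t in (1:ℝ)..x, (-(t^2)⁻¹) * (-Real.cos t)| := by
            apply (abs_sub _ _).trans; gcongr; exact abs_sub _ _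
        _ ≤ 3 := by linarith
    rw [← hsplit]
    calc |(∫ t in (0:ℝ)..1, Real.sin t / t) + ∫ t in (1:ℝ)..x, Real.sin t / t|
        ≤ |∫ t in (0:ℝ)..1, Real.sin t / t| + |∫ t in (1:ℝ)..x, Real.sin t / t| := abs_add_le _ _
      _ ≤ 4 := by linarith

/-- The primitive `K(x) = ∫_0^x J₀(t) dt`. -/
noncomputable def K0 (x : ℝ) : ℝ := ∫ t in (0 : ℝ)..x, J0 t

lemma psi_int_Ioc : IntegrableOn psi (Ioc (-1:ℝ) 1) volume := by
  have := psi_intInt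
  rw [intervalIntegrable_iff, Set.uIoc_of_le (by norm_num : (-1:ℝ) ≤ 1)] at this
  exact this

lemma K0_eq {x : ℝ} (hx : 0 ≤ x) :
    K0 x = (1/π) * ∫ t in (-1:ℝ)..1, Real.sin (x*t) / t * psi t := by
  haveI : IsFiniteMeasure (volume.restrict (Ioc (0:ℝ) x)) :=
    ⟨by rw [Measure.restrict_apply_univ]; exact measure_Ioc_lt_top⟩
  have hK : K0 x = (1/π) * ∫ s in (0:ℝ)..x, ∫ t in (-1:ℝ)..1,
      Real.cos (s*t)/Real.sqrt (1-t^2) := by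
    unfold K0 J0
    rw [intervalIntegral.integral_const_mul]
  have hint : Integrable (Function.uncurry fun s t => Real.cos (s*t)/Real.sqrt (1-t^2))
      ((volume.restrict (Ioc (0:ℝ) x)).prod (volume.restrict (Ioc (-1:ℝ) 1))) := by
    apply Integrable.mono' (g := fun p : ℝ × ℝ => (1:ℝ) * psi p.2)
    · exact Integrable.mul_prod (integrable_const (μ := volume.restrict (Ioc (0:ℝ) x)) (1:ℝ)) psi_int_Ioc
    · apply Measurable.aestronglyMeasurable
      exact (Real.continuous_cos.measurable.comp (measurable_fst.mul measurable_snd)).div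
        (Real.continuous_sqrt.measurable.comp (measurable_const.sub (measurable_snd.pow_const 2)))
    · refine Filter.Eventually.of_forall fun p => ?_
      rw [Function.uncurry, Real.norm_eq_abs, one_mul]
      unfold psi
      rw [abs_div, abs_of_nonneg (Real.sqrt_nonneg _)]
      rcases eq_or_lt_of_le (Real.sqrt_nonneg (1 - p.2^2)) with h0 | h0
      · rw [← h0]; simp
      · rw [div_le_div_iff₀ h0 h0, one_mul]
        exact mul_le_of_le_one_left h0.le (Real.abs_cos_le_one _) |>.trans (le_refl _)
  have swap : (∫ s in (0:ℝ)..x, ∫ t in (-1:ℝ)..1, Real.cos (s*t)/Real.sqrt (1-t^2))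
      = ∫ t in Ioc (-1:ℝ) 1, ∫ s in Ioc (0:ℝ) x, Real.cos (s*t)/Real.sqrt (1-t^2) := by
    rw [intervalIntegral.integral_of_le hx]
    simp only [intervalIntegral.integral_of_le (show (-1:ℝ) ≤ 1 by norm_num)]
    exact integral_integral_swap hint
  have hinner : ∀ᵐ t ∂(volume.restrict (Ioc (-1:ℝ) 1)),
      (∫ s in Ioc (0:ℝ) x, Real.cos (s*t)/Real.sqrt (1-t^2)) = Real.sin (x*t) / t * psi t := by
    have h0 : ∀ᵐ t : ℝ ∂(volume.restrict (Ioc (-1:ℝ) 1)), t ≠ 0 := by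
      apply ae_restrict_of_ae
      have h : ∀ᵐ t : ℝ ∂(volume : Measure ℝ), t ∈ ({0}ᶜ : Set ℝ) :=
        MeasureTheory.compl_mem_ae_iff.mpr Real.volume_singleton
      exact h.mono fun t ht => ht
    filter_upwards [h0] with t ht
    rw [← intervalIntegral.integral_of_le hx]
    have : (∫ s in (0:ℝ)..x, Real.cos (s*t)/Real.sqrt (1-t^2))
        = (∫ s in (0:ℝ)..x, Real.cos (s*t)) / Real.sqrt (1-t^2) :=
      intervalIntegral.integral_div _ _
    rw [this, intervalIntegral.integral_comp_mul_right Real.cos ht]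
    simp only [integral_cos, zero_mul, Real.sin_zero, sub_zero, smul_eq_mul]
    unfold psi
    rw [div_eq_mul_inv, div_eq_mul_inv, div_eq_mul_inv, one_mul]
    ring
  have hcongr : (∫ t in Ioc (-1:ℝ) 1, ∫ s in Ioc (0:ℝ) x, Real.cos (s*t)/Real.sqrt (1-t^2))
      = ∫ t in Ioc (-1:ℝ) 1, Real.sin (x*t) / t * psi t :=
    integral_congr_ae hinner
  rw [hK, swap, hcongr, ← intervalIntegral.integral_of_le (show (-1:ℝ) ≤ 1 by norm_num)]


/-- integrability of `sin (x t)/t` on `[-1,1]` -/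
lemma s1_intInt (x : ℝ) : IntervalIntegrable (fun t => Real.sin (x*t) / t) volume (-1) 1 := by
  rw [intervalIntegrable_iff]
  haveI : IsFiniteMeasure (volume.restrict (Set.uIoc (-1:ℝ) 1)) :=
    ⟨by rw [Measure.restrict_apply_univ]; exact measure_Ioc_lt_top⟩
  apply (integrable_const |x|).mono'
  · exact ((Real.continuous_sin.measurable.comp (measurable_const.mul measurable_id)).div
      measurable_id).aestronglyMeasurable
  · refine Filter.Eventually.of_forall fun t => ?_
    rcases eq_or_ne t 0 with rfl | ht
    · simp
    · rw [Real.norm_eq_abs, abs_div]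
      rw [div_le_iff₀ (abs_pos.2 ht)]
      calc |Real.sin (x*t)| ≤ |x*t| := Real.abs_sin_le_abs
        _ = |x| * |t| := abs_mul x t
lemma err_bound (x : ℝ) : ∀ᵐ t ∂(volume.restrict (Set.uIoc (-1:ℝ) 1)),
    ‖Real.sin (x*t) / t * psi t - Real.sin (x*t) / t‖ ≤ psi t := by
  rw [Set.uIoc_of_le (show (-1:ℝ) ≤ 1 by norm_num)]
  have h0 : ∀ᵐ t : ℝ ∂(volume.restrict (Ioc (-1:ℝ) 1)), t ∉ ({0, 1} : Set ℝ) := by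
    apply ae_restrict_of_ae
    have h : ∀ᵐ t : ℝ ∂(volume : Measure ℝ), t ∈ (({0, 1} : Set ℝ)ᶜ) :=
      MeasureTheory.compl_mem_ae_iff.mpr
        (((Set.finite_singleton (1:ℝ)).insert 0).measure_zero volume)
    exact h.mono fun t ht => ht
  filter_upwards [h0, ae_restrict_mem measurableSet_Ioc] with t ht htm
  simp only [Set.mem_insert_iff, Set.mem_singleton_iff, not_or] at ht
  obtain ⟨ht0, ht1⟩ := ht
  have htlt : t < 1 := lt_of_le_of_ne htm.2 ht1
  have htgt : -1 < t := htm.1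
  have hsq : t^2 < 1 := by nlinarith
  set s := Real.sqrt (1 - t^2) with hs_def
  have hs : 0 < s := Real.sqrt_pos.2 (by linarith)
  have hs1 : s ≤ 1 := by
    rw [hs_def]
    exact Real.sqrt_le_one.mpr (by nlinarith)
  have h1s : 1 - s ≤ t^2 := by
    have h : 1 - t^2 ≤ s := by
      rw [hs_def]
      exact (Real.le_sqrt (by nlinarith) (by nlinarith)).mpr (by nlinarith)
    linarith
  have hexp : Real.sin (x*t)/t * psi t - Real.sin (x*t)/t
      = Real.sin (x*t) * (1-s) / (t*s) := by
    unfold psi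
    rw [← hs_def]
    field_simp
  have habs : |t| ≤ 1 := abs_le.mpr ⟨htgt.le, htlt.le⟩
  have habs0 : 0 < |t| := abs_pos.2 ht0
  have hsin : |Real.sin (x*t)| ≤ 1 :=
    abs_le.mpr ⟨Real.neg_one_le_sin _, Real.sin_le_one _⟩
  rw [Real.norm_eq_abs, hexp, abs_div, abs_mul, abs_mul, abs_of_nonneg (by linarith : (0:ℝ) ≤ 1 - s), abs_of_pos hs]
  unfold psi
  rw [← hs_def, div_le_div_iff₀ (by positivity) hs, one_mul]
  have key : |Real.sin (x*t)| * (1 - s) ≤ |t| := by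
    nlinarith [sq_abs t, mul_le_mul_of_nonneg_right hsin (by linarith : (0:ℝ) ≤ 1-s),
      mul_le_mul_of_nonneg_left habs habs0.le]
  nlinarith [mul_le_mul_of_nonneg_right key hs.le]

lemma err_intInt (x : ℝ) :
    IntervalIntegrable (fun t => Real.sin (x*t) / t * psi t - Real.sin (x*t) / t)
      volume (-1) 1 := by
  apply psi_intInt.mono_fun' ?_ (err_bound x)
  apply Measurable.aestronglyMeasurable
  exact (((Real.continuous_sin.measurable.comp (measurable_const.mul measurable_id)).div
    measurable_id).mul psi_meas).sub
    ((Real.continuous_sin.measurable.comp (measurable_const.mul measurable_id)).div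
      measurable_id)

lemma s1_eq {x : ℝ} (hx : 0 < x) :
    (∫ t in (-1:ℝ)..1, Real.sin (x*t) / t) = 2 * ∫ u in (0:ℝ)..x, Real.sin u / u := by
  have hfun : ∀ t : ℝ, Real.sin (x*t) / t = x * ((fun u => Real.sin u / u) (x * t)) := by
    intro t
    rcases eq_or_ne t 0 with rfl | ht
    · simp
    · simp only
      field_simp
  rw [intervalIntegral.integral_congr (fun t _ => hfun t), intervalIntegral.integral_const_mul,
    intervalIntegral.integral_comp_mul_left (fun u => Real.sin u / u) hx.ne']
  rw [smul_eq_mul, ← mul_assoc, mul_inv_cancel₀ hx.ne', one_mul]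
  have hrefl : (∫ u in (-x:ℝ)..0, Real.sin u / u) = ∫ u in (0:ℝ)..x, Real.sin u / u := by
    have h := intervalIntegral.integral_comp_neg (a := (0:ℝ)) (b := x)
      (fun u => Real.sin u / u)
    simp only [Real.sin_neg, neg_div_neg_eq, neg_zero] at h
    exact h.symm
  rw [show x * (-1) = -x by ring, show x * 1 = x by ring,
    ← intervalIntegral.integral_add_adjacent_intervals (a := (-x:ℝ)) (b := 0) (c := x)
      (sinc_intInt _ _) (sinc_intInt _ _), hrefl]
  ring

/-- `K(x) = ∫_0^x J₀(t) dt` is bounded on `[0, ∞)`. -/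
theorem K0_bounded : ∃ C : ℝ, ∀ x : ℝ, 0 ≤ x → |K0 x| ≤ C := by
  refine ⟨(8 + |∫ t in (-1:ℝ)..1, psi t|) / π, fun x hx => ?_⟩
  have hC : (0:ℝ) ≤ (8 + |∫ t in (-1:ℝ)..1, psi t|) / π := by positivity
  rcases eq_or_lt_of_le hx with rfl | hx0
  · simp only [K0, intervalIntegral.integral_same, abs_zero]
    exact hC
  · rw [K0_eq hx]
    have hsum : (∫ t in (-1:ℝ)..1, Real.sin (x*t) / t * psi t)
        = (∫ t in (-1:ℝ)..1, Real.sin (x*t) / t)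
          + ∫ t in (-1:ℝ)..1, (Real.sin (x*t) / t * psi t - Real.sin (x*t) / t) := by
      rw [← intervalIntegral.integral_add (s1_intInt x) (err_intInt x)]
      apply intervalIntegral.integral_congr
      intro t _
      ring
    have hb1 : |∫ t in (-1:ℝ)..1, Real.sin (x*t) / t| ≤ 8 := by
      rw [s1_eq hx0, abs_mul, abs_two]
      linarith [Si_bound hx]
    have hb2 : |∫ t in (-1:ℝ)..1, (Real.sin (x*t) / t * psi t - Real.sin (x*t) / t)|
        ≤ |∫ t in (-1:ℝ)..1, psi t| := by
      have := intervalIntegral.norm_integral_le_abs_of_norm_le (err_bound x) psi_intInt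
      simpa using this
    rw [abs_mul, abs_of_nonneg (by positivity : (0:ℝ) ≤ 1/π), hsum, one_div,
      inv_mul_eq_div]
    gcongr
    calc |(∫ t in (-1:ℝ)..1, Real.sin (x*t) / t)
          + ∫ t in (-1:ℝ)..1, (Real.sin (x*t) / t * psi t - Real.sin (x*t) / t)|
        ≤ |∫ t in (-1:ℝ)..1, Real.sin (x*t) / t|
          + |∫ t in (-1:ℝ)..1, (Real.sin (x*t) / t * psi t - Real.sin (x*t) / t)| := abs_add_le _ _
      _ ≤ 8 + |∫ t in (-1:ℝ)..1, psi t| := by linarith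
end
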